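/- The 2(2^k - 1)-th partial convergent of the continued fraction 1/(1 + w_1/(1 + w_2/(1 + ...))) with partial numerators given by the letters w_1, w_2, ... of the infinite paperfolding word W_∞ equals the polynomial 1 + Σ_{j=1}^{k} Π_{i=1}^{j} x_i^{2^(j-i)}. -/
import Mathlib


variable {R : Type*} [CommRing R]

/-- `X k = 1 + ∑_{j=1}^k ∏_{i=1}^j x_i^{2^(j-i)}`. -/
def Xpoly (x : ℕ → R) (k : ℕ) : R :=
  1 + ∑ j ∈ Finset.Icc 1 k, ∏ i ∈ Finset.Icc 1 j, x i ^ 2 ^ (j - i)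

/-- `X̃ k = 1 + ∑_{j=1}^{k-1} ∏_{i=1}^j x_i^{2^(j-i)} - ∏_{i=1}^k x_i^{2^(k-i)}`. -/
def Xtilde (x : ℕ → R) (k : ℕ) : R :=
  1 + ∑ j ∈ Finset.Icc 1 (k - 1), ∏ i ∈ Finset.Icc 1 j, x i ^ 2 ^ (j - i)
    - ∏ i ∈ Finset.Icc 1 k, x i ^ 2 ^ (k - i)

/-- The paperfolding words: `W 1 = (-x₁, x₁)`, `W (k+1) = W k ⬝ (x_{k+1}, -x_{k+1}) ⬝ reverse (W k)`. -/
def Wword (x : ℕ → R) : ℕ → List R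
  | 0 => []
  | 1 => [-x 1, x 1]
  | (k + 2) => Wword x (k + 1) ++ [x (k + 2), -x (k + 2)] ++ (Wword x (k + 1)).reverse

/-- `M(U)`: the ordered product of the matrices `[[0,u],[1,1]]` over the letters `u` of `U`. -/
def Mword (U : List R) : Matrix (Fin 2) (Fin 2) R :=
  (U.map fun u => !![0, u; 1, 1]).prod

/-- `P k = ∏_{i=1}^k x_i^{2^(k-i)}`. -/
def Pprod (x : ℕ → R) (k : ℕ) : R :=
  ∏ i ∈ Finset.Icc 1 k, x i ^ 2 ^ (k - i)

/-- `S k = ∑_{j=1}^k P j`. -/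
def Ssum (x : ℕ → R) (k : ℕ) : R :=
  ∑ j ∈ Finset.Icc 1 k, Pprod x j

lemma Mword_append (U V : List R) : Mword (U ++ V) = Mword U * Mword V := by
  simp [Mword, List.map_append]

lemma Mword_cons (u : R) (U : List R) :
    Mword (u :: U) = !![0, u; 1, 1] * Mword U := by
  simp [Mword]

lemma Pprod_succ (x : ℕ → R) (k : ℕ) :
    Pprod x (k + 1) = Pprod x k ^ 2 * x (k + 1) := by
  rw [Pprod, Finset.prod_Icc_succ_top (by omega)]
  simp only [Nat.sub_self, pow_zero, pow_one]
  congr 1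
  rw [Pprod, ← Finset.prod_pow]
  refine Finset.prod_congr rfl fun i hi => ?_
  rw [← pow_mul]
  congr 1
  have : 1 ≤ i ∧ i ≤ k := by simpa using hi
  rw [show k + 1 - i = (k - i) + 1 by omega]
  ring

lemma Ssum_succ (x : ℕ → R) (k : ℕ) :
    Ssum x (k + 1) = Ssum x k + Pprod x (k + 1) := by
  rw [Ssum, Finset.sum_Icc_succ_top (by omega), Ssum]

/-- Closed form of `M(W_k)` and `M(reverse W_k)`. -/
lemma Mword_Wword (x : ℕ → R) (k : ℕ) :
    (Mword (Wword x (k + 1)) =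
      !![-(Ssum x k) - Pprod x (k + 1) - (Ssum x k) ^ 2, -(Ssum x k) - Pprod x (k + 1);
        (1 + Ssum x k) ^ 2, 1 + Ssum x k + Pprod x (k + 1)]) ∧
    (Mword (Wword x (k + 1)).reverse =
      !![-(Ssum x k) + Pprod x (k + 1) - (Ssum x k) ^ 2, -(Ssum x k) + Pprod x (k + 1);
        (1 + Ssum x k) ^ 2, 1 + Ssum x k - Pprod x (k + 1)]) := by
  induction k with
  | zero =>
    have hS : Ssum x 0 = 0 := by simp [Ssum]
    have hP : Pprod x 1 = x 1 := by simp [Pprod]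
    constructor <;>
    · show Mword _ = _
      rw [show Wword x 1 = [-x 1, x 1] from rfl]
      simp only [List.reverse_cons, List.reverse_nil, List.nil_append, List.cons_append,
        Mword, List.map_cons, List.map_nil, List.prod_cons, List.prod_nil, mul_one, hS, hP]
      ext i j
      fin_cases i <;> fin_cases j <;>
        simp [Matrix.mul_apply, Fin.sum_univ_two] <;> ring
  | succ n ih =>
    obtain ⟨ih1, ih2⟩ := ih
    have hrev : (Wword x (n + 2)).reverse =
        Wword x (n + 1) ++ [-x (n + 2), x (n + 2)] ++ (Wword x (n + 1)).reverse := by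
      show (Wword x (n + 1) ++ [x (n + 2), -x (n + 2)] ++ (Wword x (n + 1)).reverse).reverse = _
      simp
    have hW : Wword x (n + 2) =
        Wword x (n + 1) ++ [x (n + 2), -x (n + 2)] ++ (Wword x (n + 1)).reverse := rfl
    have hmid : ∀ u : R, Mword [u, -u] = !![u, u; 1, 1 - u] := by
      intro u
      simp only [Mword, List.map_cons, List.map_nil, List.prod_cons, List.prod_nil, mul_one]
      ext i j
      fin_cases i <;> fin_cases j <;>
        simp [Matrix.mul_apply, Fin.sum_univ_two] <;> ring
    have hmid' : ∀ u : R, Mword [-u, u] = !![-u, -u; 1, 1 + u] := by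
      intro u
      simp only [Mword, List.map_cons, List.map_nil, List.prod_cons, List.prod_nil, mul_one]
      ext i j
      fin_cases i <;> fin_cases j <;>
        simp [Matrix.mul_apply, Fin.sum_univ_two] <;> ring
    have hS : Ssum x (n + 1) = Ssum x n + Pprod x (n + 1) := Ssum_succ x n
    have hP : Pprod x (n + 2) = Pprod x (n + 1) ^ 2 * x (n + 2) := Pprod_succ x (n + 1)
    constructor
    · rw [hW, Mword_append, Mword_append, ih1, ih2, hmid, hS, hP]
      ext i j
      fin_cases i <;> fin_cases j <;>
        simp [Matrix.mul_apply, Fin.sum_univ_two] <;> ring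
    · rw [hrev, Mword_append, Mword_append, ih1, ih2, hmid', hS, hP]
      ext i j
      fin_cases i <;> fin_cases j <;>
        simp [Matrix.mul_apply, Fin.sum_univ_two] <;> ring

/-- The `2(2^k - 1)`-th partial convergent of the continued fraction
`1/(1 + w₁/(1 + w₂/(1 + ⋯)))` whose partial numerators are the letters of the paperfolding
word equals `X_k = 1 + ∑_{j=1}^k ∏_{i=1}^j x_i^{2^(j-i)}`: the convergent is computed by the
standard matrix recursion, its numerator is the `(0,1)` entry and its denominator the `(1,1)`
entry of `M(1 :: W_k)`, and these equal `X_k` and `1` respectively. -/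
theorem partial_convergent_eq_Xpoly (x : ℕ → R) (k : ℕ) (hk : 1 ≤ k) :
    Mword ((1 : R) :: Wword x k) 0 1 = Xpoly x k ∧
    Mword ((1 : R) :: Wword x k) 1 1 = 1 := by
  obtain ⟨m, rfl⟩ : ∃ m, k = m + 1 := ⟨k - 1, by omega⟩
  have h := (Mword_Wword x m).1
  have hX : Xpoly x (m + 1) = 1 + Ssum x m + Pprod x (m + 1) := by
    rw [Xpoly, show (∑ j ∈ Finset.Icc 1 (m + 1), ∏ i ∈ Finset.Icc 1 j, x i ^ 2 ^ (j - i)) =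
      Ssum x (m + 1) from rfl, Ssum_succ]
    ring
  rw [Mword_cons, h]
  constructor
  · rw [hX]
    simp [Matrix.mul_apply, Fin.sum_univ_two]
  · simp [Matrix.mul_apply, Fin.sum_univ_two]
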